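/- Let g ≥ 2 be an integer, let w be an integer with 0 ≤ w ≤ g−2, and let S = {c_1, ..., c_g} be a set of g distinct rational numbers. A configuration is a finite sequence S_1, S_2, ..., S_r of nonempty, pairwise disjoint subsets of S whose union is S; for such a configuration set t_i = Σ_{c ∈ S_i} c. A weighted configuration is a configuration together with an assignment of a non-negative integer weight w_i to each block S_i such that Σ_{i=1}^r w_i = w. The evaluation of a weighted configuration is (−1)^r · (1/r) · Π_{i=1}^r P_{w_i}(t_i), where P_{w_i} is the polynomial extension of the Stirling number [x, x−w_i]. Then the sum over all distinct weighted configurations of their evaluations is zero. -/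

import Mathlib

/-- A *weighted configuration* on a finite set `S` of rationals with total weight `w`:
an ordered finite sequence `blocks = S₁, …, S_r` of nonempty pairwise disjoint subsets of `S`
whose union is `S`, together with non-negative integer weights `w₁, …, w_r` (one per block)
summing to `w`. -/
structure WeightedConfig (S : Finset ℚ) (w : ℕ) where
  blocks : List (Finset ℚ)
  weights : List ℕ
  length_eq : weights.length = blocks.length
  nonempty : ∀ B ∈ blocks, B.Nonempty
  pairwiseDisjoint : blocks.Pairwise fun A B => Disjoint A B
  union_eq : blocks.foldr (· ∪ ·) ∅ = S
  weight_sum : weights.sum = w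

/-- The evaluation `(-1)^r · (1/r) · ∏_{i=1}^r P_{wᵢ}(tᵢ)` of a weighted configuration,
where `tᵢ` is the sum of the elements of the block `Sᵢ` and `P_{wᵢ}` is the polynomial
extension of the Stirling number `[x, x - wᵢ]`. -/
noncomputable def WeightedConfig.evaluation {S : Finset ℚ} {w : ℕ}
    (P : ℕ → Polynomial ℚ) (c : WeightedConfig S w) : ℚ :=
  (-1) ^ c.blocks.length * (c.blocks.length : ℚ)⁻¹ *
    ((c.blocks.zip c.weights).map fun bw => (P bw.2).eval (∑ x ∈ bw.1, x)).prod

open Finset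

namespace ChapmanProof

/-- sum of elements of a finset of rationals -/
def ct (U : Finset ℚ) : ℚ := ∑ x ∈ U, x

lemma ct_insert {c : ℚ} {T : Finset ℚ} (h : c ∉ T) : ct (insert c T) = c + ct T := by
  simp [ct, Finset.sum_insert h]

lemma ct_sdiff {T U : Finset ℚ} (h : T ⊆ U) : ct T + ct (U \ T) = ct U := by
  rw [ct, ct, ct, ← Finset.sum_sdiff h, add_comm]

/-- membership in iterated unions -/
lemma mem_foldr_union {a : ℚ} : ∀ (L : List (Finset ℚ)),
    a ∈ L.foldr (· ∪ ·) ∅ ↔ ∃ B ∈ L, a ∈ B := by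
  intro L
  induction L with
  | nil => simp
  | cons B L ih => simp [ih]

lemma subset_foldr_union {B : Finset ℚ} {L : List (Finset ℚ)} (h : B ∈ L) :
    B ⊆ L.foldr (· ∪ ·) ∅ := by
  intro a ha; exact (mem_foldr_union L).2 ⟨B, h, ha⟩

lemma disjoint_foldr_union {T : Finset ℚ} {L : List (Finset ℚ)}
    (h : ∀ B ∈ L, Disjoint T B) : Disjoint T (L.foldr (· ∪ ·) ∅) := by
  induction L with
  | nil => simp
  | cons B L ih =>
      simp only [List.foldr_cons, Finset.disjoint_union_right]
      exact ⟨h B (by simp), ih fun B hB => h B (by simp [hB])⟩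

lemma perm_foldr_union {L₁ L₂ : List (Finset ℚ)} (h : L₁.Perm L₂) :
    L₁.foldr (· ∪ ·) ∅ = L₂.foldr (· ∪ ·) ∅ := by
  induction h with
  | nil => rfl
  | cons x _ ih => simp [ih]
  | swap x y l =>
      simp only [List.foldr_cons]
      rw [← Finset.union_assoc, Finset.union_comm y x, Finset.union_assoc]
  | trans _ _ ih1 ih2 => rw [ih1, ih2]

lemma card_sdiff_lt {T U : Finset ℚ} (hT : T ⊆ U) (hne : T ≠ ∅) :
    (U \ T).card < U.card := by
  obtain ⟨a, ha⟩ := Finset.nonempty_iff_ne_empty.2 hne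
  have h1 : (U \ T).card ≤ (U.erase a).card := by
    apply Finset.card_le_card
    intro x hx
    rw [Finset.mem_sdiff] at hx
    exact Finset.mem_erase.2 ⟨fun h => hx.2 (h ▸ ha), hx.1⟩
  have h2 : (U.erase a).card < U.card := Finset.card_erase_lt_of_mem (hT ha)
  omega

/-- The finset of ordered partitions of `U` into nonempty blocks. -/
def OP (U : Finset ℚ) : Finset (List (Finset ℚ)) :=
  if h : U = ∅ then {([] : List (Finset ℚ))}
  else (U.powerset.erase ∅).attach.biUnion
    (fun T => (OP (U \ T.1)).image (fun L => T.1 :: L))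
  termination_by U.card
  decreasing_by
    have hT := T.2
    rw [Finset.mem_erase, Finset.mem_powerset] at hT
    exact card_sdiff_lt hT.2 hT.1

lemma OP_empty : OP ∅ = {([] : List (Finset ℚ))} := by rw [OP]; simp

lemma sum_OP_nonempty {M : Type*} [AddCommMonoid M] {U : Finset ℚ} (hU : U ≠ ∅)
    (φ : List (Finset ℚ) → M) :
    ∑ L ∈ OP U, φ L =
      ∑ T ∈ U.powerset.erase ∅, ∑ L' ∈ OP (U \ T), φ (T :: L') := by
  conv_lhs => rw [OP]
  rw [dif_neg hU]
  rw [Finset.sum_biUnion]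
  · rw [← Finset.sum_attach (U.powerset.erase ∅)
      (fun T => ∑ L' ∈ OP (U \ T), φ (T :: L'))]
    apply Finset.sum_congr rfl
    intro T _
    rw [Finset.sum_image]
    intro a _ b _ h
    simpa using h
  · intro T1 _ T2 _ hne
    apply Finset.disjoint_left.2
    intro L h1 h2
    simp only [Finset.mem_image] at h1 h2
    obtain ⟨a, _, ha⟩ := h1
    obtain ⟨b, _, hb⟩ := h2
    apply hne
    apply Subtype.ext
    rw [← ha] at hb
    have := hb
    injection this with h1 h2
    exact h1.symm

lemma mem_OP {U : Finset ℚ} {L : List (Finset ℚ)} :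
    L ∈ OP U ↔ (∀ B ∈ L, B.Nonempty) ∧ L.Pairwise (fun A B => Disjoint A B) ∧
      L.foldr (· ∪ ·) ∅ = U := by
  induction U using Finset.strongInduction generalizing L with
  | _ U ih =>
  constructor
  · intro hL
    by_cases hU : U = ∅
    · subst hU
      rw [OP_empty, Finset.mem_singleton] at hL
      subst hL
      simp
    · rw [OP, dif_neg hU] at hL
      simp only [Finset.mem_biUnion, Finset.mem_image, Finset.mem_attach, true_and] at hL
      obtain ⟨⟨T, hT⟩, L', hL', rfl⟩ := hL
      rw [Finset.mem_erase, Finset.mem_powerset] at hT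
      have hss : U \ T ⊂ U := Finset.sdiff_ssubset hT.2 (Finset.nonempty_iff_ne_empty.2 hT.1)
      have ihp := (ih _ hss).1 hL'
      obtain ⟨hne, hpw, hfold⟩ := ihp
      refine ⟨?_, ?_, ?_⟩
      · intro B hB
        rcases List.mem_cons.1 hB with rfl | hB
        · exact Finset.nonempty_iff_ne_empty.2 hT.1
        · exact hne B hB
      · refine List.pairwise_cons.2 ⟨?_, hpw⟩
        intro B hB
        have hsub : B ⊆ U \ T := hfold ▸ subset_foldr_union hB
        exact Finset.disjoint_left.2 fun a haT haB =>
          (Finset.mem_sdiff.1 (hsub haB)).2 haT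
      · simp only [List.foldr_cons, hfold]
        exact Finset.union_sdiff_of_subset hT.2
  · rintro ⟨hne, hpw, hfold⟩
    match L with
    | [] =>
        simp only [List.foldr_nil] at hfold
        subst hfold
        rw [OP_empty]; simp
    | T :: L' =>
        have hTne : T.Nonempty := hne T (by simp)
        have hdisj : Disjoint T (L'.foldr (· ∪ ·) ∅) :=
          disjoint_foldr_union fun B hB => (List.pairwise_cons.1 hpw).1 B hB
        simp only [List.foldr_cons] at hfold
        have hTU : T ⊆ U := hfold ▸ Finset.subset_union_left
        have hU : U ≠ ∅ := fun h => by
          rw [h] at hTU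
          exact Finset.nonempty_iff_ne_empty.1 hTne (Finset.subset_empty.1 hTU)
        have hrest : U \ T = L'.foldr (· ∪ ·) ∅ := by
          rw [← hfold, Finset.union_sdiff_cancel_left hdisj]
        have hss : U \ T ⊂ U := Finset.sdiff_ssubset hTU hTne
        have hL' : L' ∈ OP (U \ T) := by
          rw [ih _ hss]
          exact ⟨fun B hB => hne B (by simp [hB]), (List.pairwise_cons.1 hpw).2, hrest.symm⟩
        rw [OP, dif_neg hU]
        simp only [Finset.mem_biUnion, Finset.mem_image, Finset.mem_attach, true_and]
        refine ⟨⟨T, ?_⟩, L', hL', rfl⟩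
        rw [Finset.mem_erase, Finset.mem_powerset]
        exact ⟨Finset.nonempty_iff_ne_empty.1 hTne, hTU⟩

lemma OP_rotate {U : Finset ℚ} {L : List (Finset ℚ)} (hL : L ∈ OP U) (n : ℕ) :
    L.rotate n ∈ OP U := by
  rw [mem_OP] at hL ⊢
  have hperm : (L.rotate n).Perm L := List.rotate_perm L n
  refine ⟨fun B hB => hL.1 B (hperm.mem_iff.1 hB), ?_, ?_⟩
  · exact (List.Perm.pairwise_iff (fun {A B} (h : Disjoint A B) => h.symm) hperm).2 hL.2.1
  · rw [perm_foldr_union hperm, hL.2.2]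

end ChapmanProof

namespace ChapmanProof

open Polynomial

lemma poly_zero_of_nat_roots (Q : Polynomial ℚ) (m : ℕ)
    (h : ∀ n : ℕ, m ≤ n → Q.eval (n : ℚ) = 0) : Q = 0 := by
  apply Polynomial.eq_zero_of_infinite_isRoot
  apply Set.infinite_of_injective_forall_mem (f := fun k : ℕ => ((k + m : ℕ) : ℚ))
  case hi =>
    intro a b hab
    have : ((a + m : ℕ) : ℚ) = ((b + m : ℕ) : ℚ) := hab
    have h2 : a + m = b + m := by exact_mod_cast this
    omega
  case hf =>
    intro k
    exact h (k + m) (by omega)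

section PFacts

variable {P : ℕ → Polynomial ℚ}
variable (hPdeg : ∀ v : ℕ, (P v).degree = (2 * v : ℕ))
variable (hPval : ∀ v : ℕ, ∀ n : ℕ, v ≤ n →
      (P v).eval (n : ℚ) = (ascPochhammer ℚ n).coeff (n - v))

include hPdeg hPval in
lemma P_zero : P 0 = Polynomial.C 1 := by
  have hdeg : (P 0).degree ≤ 0 := by rw [hPdeg 0]; norm_num
  have hC := Polynomial.eq_C_of_degree_le_zero hdeg
  have hval := hPval 0 0 (le_refl 0)
  rw [hC]
  congr 1
  rw [hC] at hval
  simpa using hval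

lemma asc_coeff_succ (n w : ℕ) (h : w + 1 ≤ n) :
    (ascPochhammer ℚ (n+1)).coeff (n - w) =
      (ascPochhammer ℚ n).coeff (n - (w+1)) + (n : ℚ) * (ascPochhammer ℚ n).coeff (n - w) := by
  rw [ascPochhammer_succ_right]
  have hcast : ((n : ℕ) : ℚ[X]) = Polynomial.C (n : ℚ) := by
    simp [Polynomial.C_eq_natCast]
  rw [hcast, mul_add, Polynomial.coeff_add, Polynomial.coeff_mul_C]
  have hk : n - w = (n - (w+1)) + 1 := by omega
  rw [hk, Polynomial.coeff_mul_X]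
  ring

include hPval in
lemma P_rec (w : ℕ) (x : ℚ) :
    (P (w+1)).eval (x+1) = (P (w+1)).eval x + x * (P w).eval x := by
  set Q := (P (w+1)).comp (X + Polynomial.C 1) - P (w+1) - X * P w with hQ
  have hzero : Q = 0 := by
    apply poly_zero_of_nat_roots Q (w+1)
    intro n hn
    rw [hQ]
    simp only [Polynomial.eval_sub, Polynomial.eval_comp, Polynomial.eval_add,
      Polynomial.eval_X, Polynomial.eval_C, Polynomial.eval_mul]
    have h1 : ((n : ℚ) + 1) = ((n + 1 : ℕ) : ℚ) := by push_cast; ring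
    rw [h1, hPval (w+1) (n+1) (by omega), hPval (w+1) n hn, hPval w n (by omega)]
    have h2 : n + 1 - (w + 1) = n - w := by omega
    rw [h2, asc_coeff_succ n w hn]
    ring
  have := congrArg (Polynomial.eval x) hzero
  rw [hQ] at this
  simp only [Polynomial.eval_sub, Polynomial.eval_comp, Polynomial.eval_add,
    Polynomial.eval_X, Polynomial.eval_C, Polynomial.eval_mul, Polynomial.eval_zero] at this
  linarith

include hPval in
lemma P_van : ∀ w : ℕ, ∀ n : ℕ, n ≤ w + 1 → (P (w+1)).eval (n : ℚ) = 0 := by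
  intro w
  induction w using Nat.strong_induction_on with
  | _ w ihw =>
  -- downward induction: d measures w + 1 - n
  suffices h : ∀ d n : ℕ, n + d = w + 1 → (P (w+1)).eval (n : ℚ) = 0 by
    intro n hn
    exact h (w + 1 - n) n (by omega)
  intro d
  induction d with
  | zero =>
      intro n hn
      have hn' : n = w + 1 := by omega
      subst hn'
      rw [hPval (w+1) (w+1) (le_refl _)]
      simp only [Nat.sub_self]
      rw [Polynomial.coeff_zero_eq_eval_zero, ascPochhammer_eval_zero]
      simp
  | succ d ihd =>
      intro n hn
      have hrec := P_rec hPval w (n : ℚ)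
      have h1 : ((n : ℚ) + 1) = ((n + 1 : ℕ) : ℚ) := by push_cast; ring
      rw [h1] at hrec
      have h2 : (P (w+1)).eval ((n + 1 : ℕ) : ℚ) = 0 := ihd (n+1) (by omega)
      rw [h2] at hrec
      rcases Nat.eq_zero_or_pos n with hn0 | hn0
      · subst hn0
        simpa using hrec.symm
      · have h3 : (P w).eval (n : ℚ) = 0 := by
          obtain ⟨w'', rfl⟩ : ∃ w'', w = w'' + 1 := ⟨w - 1, by omega⟩
          exact ihw w'' (by omega) n (by omega)
        rw [h3, mul_zero] at hrec
        linarith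

end PFacts

end ChapmanProof

namespace ChapmanProof

noncomputable section

open PowerSeries

variable (P : ℕ → Polynomial ℚ)

/-- the block series `∑_w P_w(t_T + s) q^w` -/
def Fs (s : ℚ) (T : Finset ℚ) : PowerSeries ℚ :=
  PowerSeries.mk fun w => (P w).eval (ct T + s)

def prodF (L : List (Finset ℚ)) : PowerSeries ℚ := (L.map (Fs P 0)).prod

/-- inverse element: signed sum over ordered partitions -/
def gX (U : Finset ℚ) : PowerSeries ℚ :=
  ∑ L ∈ OP U, PowerSeries.C ((-1 : ℚ) ^ L.length) * prodF P L

/-- subset convolution -/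
def cnv (x y : Finset ℚ → PowerSeries ℚ) : Finset ℚ → PowerSeries ℚ :=
  fun U => ∑ T ∈ U.powerset, x T * y (U \ T)

/-- convolution identity -/
def dd : Finset ℚ → PowerSeries ℚ := fun U => if U = ∅ then 1 else 0

/-- the derivation -/
def DD (x : Finset ℚ → PowerSeries ℚ) : Finset ℚ → PowerSeries ℚ :=
  fun U => PowerSeries.C (ct U) * x U

lemma cnv_comm (x y : Finset ℚ → PowerSeries ℚ) : cnv x y = cnv y x := by
  funext U
  unfold cnv
  refine Finset.sum_nbij' (i := fun T => U \ T) (j := fun T => U \ T) ?_ ?_ ?_ ?_ ?_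
  · intro T hT
    exact Finset.mem_powerset.2 (Finset.sdiff_subset)
  · intro T hT
    exact Finset.mem_powerset.2 (Finset.sdiff_subset)
  · intro T hT
    exact Finset.sdiff_sdiff_eq_self (Finset.mem_powerset.1 hT)
  · intro T hT
    exact Finset.sdiff_sdiff_eq_self (Finset.mem_powerset.1 hT)
  · intro T hT
    rw [Finset.sdiff_sdiff_eq_self (Finset.mem_powerset.1 hT), mul_comm]

lemma cnv_assoc (x y z : Finset ℚ → PowerSeries ℚ) : cnv (cnv x y) z = cnv x (cnv y z) := by
  funext U
  unfold cnv
  simp only [Finset.sum_mul, Finset.mul_sum]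
  rw [Finset.sum_sigma' U.powerset (fun T => T.powerset)
      (fun T V => x V * y (T \ V) * z (U \ T)),
    Finset.sum_sigma' U.powerset (fun V => (U \ V).powerset)
      (fun V W => x V * (y W * z ((U \ V) \ W)))]
  refine Finset.sum_nbij' (i := fun p => ⟨p.2, p.1 \ p.2⟩) (j := fun p => ⟨p.1 ∪ p.2, p.1⟩)
    ?_ ?_ ?_ ?_ ?_
  · rintro ⟨T, V⟩ hp
    simp only [Finset.mem_sigma, Finset.mem_powerset] at hp ⊢
    exact ⟨hp.2.trans hp.1, Finset.sdiff_subset_sdiff hp.1 (le_refl _)⟩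
  · rintro ⟨V, W⟩ hp
    simp only [Finset.mem_sigma, Finset.mem_powerset] at hp ⊢
    have hWU : W ⊆ U := hp.2.trans Finset.sdiff_subset
    exact ⟨Finset.union_subset hp.1 hWU, Finset.subset_union_left⟩
  · rintro ⟨T, V⟩ hp
    simp only [Finset.mem_sigma, Finset.mem_powerset] at hp
    have : V ∪ T \ V = T := Finset.union_sdiff_of_subset hp.2
    simp [this]
  · rintro ⟨V, W⟩ hp
    simp only [Finset.mem_sigma, Finset.mem_powerset] at hp
    have hd : Disjoint V W := Finset.disjoint_of_subset_right hp.2 Finset.disjoint_sdiff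
    have : (V ∪ W) \ V = W := Finset.union_sdiff_cancel_left hd
    simp [this]
  · rintro ⟨T, V⟩ hp
    simp only [Finset.mem_sigma, Finset.mem_powerset] at hp
    have h1 : U \ T = (U \ V) \ (T \ V) := by
      ext a
      simp only [Finset.mem_sdiff]
      constructor
      · rintro ⟨h1, h2⟩
        exact ⟨⟨h1, fun hv => h2 (hp.2 hv)⟩, fun ht => h2 ht.1⟩
      · rintro ⟨⟨h1, h2⟩, h3⟩
        exact ⟨h1, fun ht => h3 ⟨ht, h2⟩⟩
    rw [h1, mul_assoc]

lemma cnv_dd (x : Finset ℚ → PowerSeries ℚ) : cnv x dd = x := by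
  funext U
  unfold cnv dd
  rw [Finset.sum_eq_single U]
  · simp
  · intro T hT hne
    have : ¬(U \ T = ∅) := by
      rw [Finset.sdiff_eq_empty_iff_subset]
      intro hsub
      exact hne (Finset.Subset.antisymm (Finset.mem_powerset.1 hT) hsub)
    simp [this]
  · intro h
    exact absurd (Finset.mem_powerset.2 (le_refl _)) h

lemma leibniz (x y : Finset ℚ → PowerSeries ℚ) :
    DD (cnv x y) = fun U => cnv (DD x) y U + cnv x (DD y) U := by
  funext U
  unfold DD cnv
  rw [Finset.mul_sum, ← Finset.sum_add_distrib]
  apply Finset.sum_congr rfl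
  intro T hT
  rw [← ct_sdiff (Finset.mem_powerset.1 hT), map_add]
  ring

end

end ChapmanProof

namespace ChapmanProof

noncomputable section

open PowerSeries

variable (P : ℕ → Polynomial ℚ)

lemma gX_empty : gX P ∅ = 1 := by
  unfold gX
  rw [OP_empty, Finset.sum_singleton]
  simp [prodF]

lemma gX_rec {U : Finset ℚ} (hU : U ≠ ∅) :
    gX P U = -∑ T ∈ U.powerset.erase ∅, Fs P 0 T * gX P (U \ T) := by
  unfold gX
  rw [sum_OP_nonempty hU]
  rw [← Finset.sum_neg_distrib]
  apply Finset.sum_congr rfl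
  intro T hT
  rw [Finset.mul_sum, ← Finset.sum_neg_distrib]
  apply Finset.sum_congr rfl
  intro L' hL'
  simp only [List.length_cons, prodF, List.map_cons, List.prod_cons]
  rw [pow_succ, map_mul, map_neg, map_one]
  ring

/-- the element `R s = A^{(s)} * g` -/
def Rel (s : ℚ) : Finset ℚ → PowerSeries ℚ := cnv (Fs P s) (gX P)

/-- the element `V = (DA) * g` -/
def Vel : Finset ℚ → PowerSeries ℚ := cnv (DD (Fs P 0)) (gX P)


variable {P}
variable (hP0 : P 0 = Polynomial.C 1)
variable (hPval : ∀ v : ℕ, ∀ n : ℕ, v ≤ n →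
      (P v).eval (n : ℚ) = (ascPochhammer ℚ n).coeff (n - v))

include hP0 hPval in
lemma F0_empty : Fs P 0 ∅ = 1 := by
  unfold Fs
  ext w
  rw [PowerSeries.coeff_mk]
  have hct : ct (∅ : Finset ℚ) + 0 = 0 := by simp [ct]
  rw [hct]
  cases w with
  | zero => simp [hP0]
  | succ w =>
      have h0 : ((0 : ℕ) : ℚ) = (0 : ℚ) := by norm_num
      rw [← h0, P_van hPval w 0 (by omega)]
      simp [PowerSeries.coeff_one]

include hP0 hPval in
lemma cnvAg : cnv (Fs P 0) (gX P) = dd := by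
  funext U
  by_cases hU : U = ∅
  · subst hU
    unfold cnv dd
    simp [F0_empty hP0 hPval, gX_empty]
  · unfold cnv dd
    rw [if_neg hU]
    have hmem : (∅ : Finset ℚ) ∈ U.powerset := Finset.mem_powerset.2 (Finset.empty_subset U)
    rw [← Finset.add_sum_erase _ _ hmem, F0_empty hP0 hPval, Finset.sdiff_empty, one_mul,
      gX_rec P hU]
    ring

variable (hrec : ∀ w : ℕ, ∀ x : ℚ, (P (w+1)).eval (x+1) = (P (w+1)).eval x + x * (P w).eval x)

lemma coeff_zero_X_mul (φ : PowerSeries ℚ) : PowerSeries.coeff 0 (PowerSeries.X * φ) = 0 := by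
  simp [PowerSeries.coeff_zero_eq_constantCoeff, map_mul]

include hP0 hrec in
lemma Fs_succ (s : ℚ) (T : Finset ℚ) :
    Fs P (s+1) T = Fs P s T + PowerSeries.X * (PowerSeries.C (ct T + s) * Fs P s T) := by
  ext w
  rw [map_add]
  cases w with
  | zero =>
      rw [coeff_zero_X_mul, add_zero]
      unfold Fs
      rw [PowerSeries.coeff_mk, PowerSeries.coeff_mk, hP0]
      simp
  | succ w =>
      rw [PowerSeries.coeff_succ_X_mul, PowerSeries.coeff_C_mul]
      unfold Fs
      rw [PowerSeries.coeff_mk, PowerSeries.coeff_mk, PowerSeries.coeff_mk]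
      have h1 : ct T + (s + 1) = (ct T + s) + 1 := by ring
      rw [h1, hrec w (ct T + s)]

include hP0 hPval in
lemma As_eq (s : ℚ) : cnv (cnv (Fs P s) (gX P)) (Fs P 0) = Fs P s := by
  rw [cnv_assoc, cnv_comm (gX P) (Fs P 0), cnvAg hP0 hPval, cnv_dd]

include hP0 hPval in
lemma LemC (s : ℚ) :
    cnv (DD (Fs P s)) (gX P) = fun U =>
      DD (cnv (Fs P s) (gX P)) U +
        cnv (cnv (Fs P s) (gX P)) (cnv (DD (Fs P 0)) (gX P)) U := by
  have hAs : Fs P s = cnv (cnv (Fs P s) (gX P)) (Fs P 0) := (As_eq hP0 hPval s).symm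
  funext U
  conv_lhs => rw [hAs]
  rw [leibniz]
  have hadd : cnv (fun V => cnv (DD (cnv (Fs P s) (gX P))) (Fs P 0) V +
      cnv (cnv (Fs P s) (gX P)) (DD (Fs P 0)) V) (gX P) U =
      cnv (cnv (DD (cnv (Fs P s) (gX P))) (Fs P 0)) (gX P) U +
      cnv (cnv (cnv (Fs P s) (gX P)) (DD (Fs P 0))) (gX P) U := by
    unfold cnv
    rw [← Finset.sum_add_distrib]
    apply Finset.sum_congr rfl
    intro T _
    ring
  rw [hadd, cnv_assoc, cnv_assoc, cnvAg hP0 hPval, cnv_dd]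

include hP0 hPval hrec in
lemma Rrec (s : ℚ) (U : Finset ℚ) :
    Rel P (s+1) U = Rel P s U + PowerSeries.X *
      (PowerSeries.C s * Rel P s U + PowerSeries.C (ct U) * Rel P s U +
        cnv (Rel P s) (Vel P) U) := by
  have step1 : Rel P (s+1) U = Rel P s U + PowerSeries.X *
      (PowerSeries.C s * Rel P s U + cnv (DD (Fs P s)) (gX P) U) := by
    unfold Rel cnv DD
    rw [mul_add]
    simp only [Finset.mul_sum]
    rw [← Finset.sum_add_distrib, ← Finset.sum_add_distrib]
    apply Finset.sum_congr rfl
    intro T _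
    rw [Fs_succ hP0 hrec s T, map_add]
    ring
  rw [step1, LemC hP0 hPval s]
  unfold Rel Vel DD
  ring

lemma Vel_empty : Vel P ∅ = 0 := by
  unfold Vel cnv DD
  rw [Finset.powerset_empty, Finset.sum_singleton]
  have : ct (∅ : Finset ℚ) = 0 := by simp [ct]
  simp [this]

lemma Fs_shift {c : ℚ} {T : Finset ℚ} (h : c ∉ T) : Fs P 0 (insert c T) = Fs P c T := by
  unfold Fs
  congr 1
  funext w
  rw [ct_insert h]
  ring_nf

lemma Vel_formula (Y : Finset ℚ) :
    Vel P Y = ∑ c ∈ Y, PowerSeries.C c * Rel P c (Y \ {c}) := by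
  unfold Vel Rel cnv DD
  have expand : ∀ T ∈ Y.powerset,
      PowerSeries.C (ct T) * Fs P 0 T * gX P (Y \ T) =
      ∑ c ∈ T, PowerSeries.C c * (Fs P 0 T * gX P (Y \ T)) := by
    intro T _
    rw [ct, map_sum, Finset.sum_mul, Finset.sum_mul]
    apply Finset.sum_congr rfl
    intro c _
    ring
  rw [Finset.sum_congr rfl expand]
  have expand2 : ∀ c ∈ Y,
      PowerSeries.C c * (∑ T' ∈ (Y \ {c}).powerset, Fs P c T' * gX P ((Y \ {c}) \ T')) =
      ∑ T' ∈ (Y \ {c}).powerset, PowerSeries.C c * (Fs P c T' * gX P ((Y \ {c}) \ T')) := by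
    intro c _
    rw [Finset.mul_sum]
  rw [Finset.sum_congr rfl expand2]
  rw [Finset.sum_sigma' Y.powerset (fun T => T)
    (fun T c => PowerSeries.C c * (Fs P 0 T * gX P (Y \ T))),
    Finset.sum_sigma' Y (fun c => (Y \ {c}).powerset)
    (fun c T' => PowerSeries.C c * (Fs P c T' * gX P ((Y \ {c}) \ T')))]
  refine Finset.sum_nbij' (i := fun p => ⟨p.2, p.1.erase p.2⟩)
    (j := fun p => ⟨insert p.1 p.2, p.1⟩) ?_ ?_ ?_ ?_ ?_
  · rintro ⟨T, c⟩ hp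
    simp only [Finset.mem_sigma, Finset.mem_powerset] at hp ⊢
    refine ⟨hp.1 hp.2, ?_⟩
    intro a ha
    rw [Finset.mem_erase] at ha
    rw [Finset.mem_sdiff, Finset.mem_singleton]
    exact ⟨hp.1 ha.2, ha.1⟩
  · rintro ⟨c, T'⟩ hp
    simp only [Finset.mem_sigma, Finset.mem_powerset] at hp ⊢
    constructor
    · apply Finset.insert_subset hp.1
      intro a ha
      exact (Finset.mem_sdiff.1 (hp.2 ha)).1
    · exact Finset.mem_insert_self _ _
  · rintro ⟨T, c⟩ hp
    simp only [Finset.mem_sigma, Finset.mem_powerset] at hp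
    have : insert c (T.erase c) = T := Finset.insert_erase hp.2
    simp [this]
  · rintro ⟨c, T'⟩ hp
    simp only [Finset.mem_sigma, Finset.mem_powerset] at hp
    have hcT' : c ∉ T' := by
      intro hc
      exact (Finset.mem_sdiff.1 (hp.2 hc)).2 (Finset.mem_singleton_self c)
    have : (insert c T').erase c = T' := Finset.erase_insert hcT'
    simp [this]
  · rintro ⟨T, c⟩ hp
    simp only [Finset.mem_sigma, Finset.mem_powerset] at hp
    have hins : insert c (T.erase c) = T := Finset.insert_erase hp.2
    have hshift : Fs P 0 T = Fs P c (T.erase c) := by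
      conv_lhs => rw [← hins]
      exact Fs_shift (Finset.notMem_erase c T)
    have hsd : Y \ T = (Y \ {c}) \ (T.erase c) := by
      ext a
      simp only [Finset.mem_sdiff, Finset.mem_singleton, Finset.mem_erase]
      constructor
      · rintro ⟨h1, h2⟩
        exact ⟨⟨h1, fun h => h2 (h ▸ hp.2)⟩, fun h => h2 h.2⟩
      · rintro ⟨⟨h1, h2⟩, h3⟩
        exact ⟨h1, fun h4 => h3 ⟨h2, h4⟩⟩
    rw [hshift, hsd]

end

end ChapmanProof

namespace ChapmanProof

noncomputable section

open PowerSeries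

variable {P : ℕ → Polynomial ℚ}
variable (hP0 : P 0 = Polynomial.C 1)
variable (hPval : ∀ v : ℕ, ∀ n : ℕ, v ≤ n →
      (P v).eval (n : ℚ) = (ascPochhammer ℚ n).coeff (n - v))
variable (hrec : ∀ w : ℕ, ∀ x : ℚ, (P (w+1)).eval (x+1) = (P (w+1)).eval x + x * (P w).eval x)

include hP0 hPval hrec in
theorem main (U : Finset ℚ) :
    ∀ (s : ℚ) (w : ℕ), w < U.card → PowerSeries.coeff w (Rel P s U) = 0 := by
  induction U using Finset.strongInduction with
  | _ U ih =>
  have hV : ∀ Y : Finset ℚ, Y ⊆ U → ∀ w2 : ℕ, w2 + 1 < Y.card →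
      PowerSeries.coeff w2 (Vel P Y) = 0 := by
    intro Y hY w2 hw2
    rw [Vel_formula, map_sum]
    apply Finset.sum_eq_zero
    intro c hc
    rw [PowerSeries.coeff_C_mul]
    have hsub : Y \ {c} ⊂ U := by
      apply Finset.ssubset_of_ssubset_of_subset _ hY
      rw [← Finset.erase_eq]
      exact Finset.erase_ssubset hc
    have hcard : w2 < (Y \ {c}).card := by
      rw [← Finset.erase_eq, Finset.card_erase_of_mem hc]
      omega
    rw [ih _ hsub c w2 hcard, mul_zero]
  have hN : ∀ m : ℕ, ∀ w' : ℕ, w' < U.card → PowerSeries.coeff w' (Rel P (m:ℚ) U) = 0 := by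
    intro m
    induction m with
    | zero =>
        intro w' hw'
        have h0 : ((0:ℕ):ℚ) = (0:ℚ) := by norm_num
        rw [h0]
        have hdd : Rel P 0 U = dd U := congrFun (cnvAg hP0 hPval) U
        rw [hdd]
        have hUne : U ≠ ∅ := by
          intro h
          rw [h] at hw'
          simp at hw'
        simp [dd, hUne]
    | succ m ihm =>
        intro w' hw'
        have hcast : ((m+1 : ℕ):ℚ) = (m:ℚ) + 1 := by push_cast; ring
        rw [hcast, Rrec hP0 hPval hrec, map_add, ihm w' hw', zero_add]
        cases w' with
        | zero => exact coeff_zero_X_mul _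
        | succ w'' =>
            rw [PowerSeries.coeff_succ_X_mul, map_add, map_add, PowerSeries.coeff_C_mul,
              PowerSeries.coeff_C_mul, ihm w'' (by omega), mul_zero, mul_zero, zero_add,
              zero_add]
            unfold cnv
            rw [map_sum]
            apply Finset.sum_eq_zero
            intro T hT
            rw [PowerSeries.coeff_mul]
            apply Finset.sum_eq_zero
            intro p hp
            rw [Finset.HasAntidiagonal.mem_antidiagonal] at hp
            by_cases hTU : T = U
            · subst hTU
              rw [Finset.sdiff_self, Vel_empty, map_zero, mul_zero]
            · have hTsub : T ⊆ U := Finset.mem_powerset.1 hT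
              have hT' : T ⊂ U :=
                ⟨hTsub, fun h => hTU (Finset.Subset.antisymm hTsub h)⟩
              by_cases h1 : p.1 < T.card
              · rw [ih T hT' (m:ℚ) p.1 h1, zero_mul]
              · have hcardT : T.card ≤ U.card := Finset.card_le_card hTsub
                have hTne : T.card ≠ U.card := by
                  intro h
                  exact hTU (Finset.eq_of_subset_of_card_le hTsub (le_of_eq h.symm))
                have hcards : (U \ T).card = U.card - T.card := Finset.card_sdiff_of_subset hTsub
                have h2 : p.2 + 1 < (U \ T).card := by omega
                rw [hV (U \ T) Finset.sdiff_subset p.2 h2, mul_zero]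
  intro s w hw
  set Φ : Polynomial ℚ := ∑ T ∈ U.powerset, ∑ p ∈ Finset.HasAntidiagonal.antidiagonal w,
      (P p.1).comp (Polynomial.X + Polynomial.C (ct T)) *
        Polynomial.C (PowerSeries.coeff p.2 (gX P (U \ T))) with hΦ
  have heval : ∀ x : ℚ, Φ.eval x = PowerSeries.coeff w (Rel P x U) := by
    intro x
    rw [hΦ]
    rw [Polynomial.eval_finset_sum]
    unfold Rel cnv
    rw [map_sum]
    apply Finset.sum_congr rfl
    intro T _
    rw [Polynomial.eval_finset_sum, PowerSeries.coeff_mul]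
    apply Finset.sum_congr rfl
    intro p _
    rw [Polynomial.eval_mul, Polynomial.eval_comp, Polynomial.eval_add, Polynomial.eval_X,
      Polynomial.eval_C, Polynomial.eval_C]
    unfold Fs
    rw [PowerSeries.coeff_mk, add_comm x (ct T)]
  have hzero : Φ = 0 :=
    poly_zero_of_nat_roots Φ 0 (fun n _ => by rw [heval]; exact hN n w hw)
  rw [← heval s, hzero, Polynomial.eval_zero]

end

end ChapmanProof

namespace ChapmanProof

noncomputable section

open PowerSeries

variable (P : ℕ → Polynomial ℚ)

lemma prodF_rotate (L : List (Finset ℚ)) (n : ℕ) : prodF P (L.rotate n) = prodF P L := by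
  unfold prodF
  exact List.Perm.prod_eq ((List.rotate_perm L n).map (Fs P 0))

lemma headI_ne_nil {c : ℚ} {M : List (Finset ℚ)} (hc : c ∈ M.headI) : M ≠ [] := by
  intro h
  subst h
  exact Finset.notMem_empty c hc

lemma headI_eq_get {l : List (Finset ℚ)} (h : 0 < l.length) : l.headI = l.get ⟨0, h⟩ := by
  cases l with
  | nil => simp at h
  | cons a t => rfl

lemma unique_idx {U : Finset ℚ} {c : ℚ} {L : List (Finset ℚ)}
    (hL : L ∈ OP U) (hc : c ∈ U) :
    ∃! j : ℕ, j ∈ (Finset.range L.length).filter (fun j => c ∈ L.getD j ∅) := by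
  rw [mem_OP] at hL
  obtain ⟨hne, hpw, hfold⟩ := hL
  have hex : ∃ B ∈ L, c ∈ B := (mem_foldr_union L).1 (hfold ▸ hc)
  obtain ⟨B, hB, hcB⟩ := hex
  obtain ⟨i, rfl⟩ := List.mem_iff_get.1 hB
  refine ⟨i.1, ?_, ?_⟩
  · simp only [Finset.mem_filter, Finset.mem_range]
    refine ⟨i.2, ?_⟩
    rw [List.getD_eq_get L ∅ i]
    exact hcB
  · intro j hj
    rw [Finset.mem_filter, Finset.mem_range] at hj
    obtain ⟨hjlen, hcj⟩ := hj
    rw [List.getD_eq_get L ∅ ⟨j, hjlen⟩] at hcj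
    by_contra hne'
    have hpg := List.pairwise_iff_get.1 hpw
    rcases Nat.lt_or_ge j i.1 with h | h
    · exact Finset.disjoint_left.1 (hpg ⟨j, hjlen⟩ i h) hcj hcB
    · have h' : i.1 < j := lt_of_le_of_ne h (fun hh => hne' hh.symm)
      exact Finset.disjoint_left.1 (hpg i ⟨j, hjlen⟩ h') hcB hcj

/-- rotation lemma: the `1/r`-weighted sum over all ordered partitions equals the sum over
ordered partitions whose first block contains `c`. -/
lemma rotation_lemma {U : Finset ℚ} {c : ℚ} (hc : c ∈ U) :
    ∑ L ∈ OP U, PowerSeries.C ((-1 : ℚ) ^ L.length * (L.length : ℚ)⁻¹) * prodF P L =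
    ∑ M ∈ (OP U).filter (fun M => c ∈ M.headI),
      PowerSeries.C ((-1 : ℚ) ^ M.length) * prodF P M := by
  have step1 : ∀ L ∈ OP U,
      PowerSeries.C ((-1 : ℚ) ^ L.length * (L.length : ℚ)⁻¹) * prodF P L =
      ∑ j ∈ (Finset.range L.length).filter (fun j => c ∈ L.getD j ∅),
        PowerSeries.C ((-1 : ℚ) ^ L.length * (L.length : ℚ)⁻¹) * prodF P L := by
    intro L hL
    obtain ⟨j₀, hj₀, huniq⟩ := unique_idx hL hc
    rw [show (Finset.range L.length).filter (fun j => c ∈ L.getD j ∅) = {j₀} from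
      Finset.eq_singleton_iff_unique_mem.2 ⟨hj₀, huniq⟩]
    rw [Finset.sum_singleton]
  rw [Finset.sum_congr rfl step1]
  rw [Finset.sum_sigma' (OP U) (fun L => (Finset.range L.length).filter (fun j => c ∈ L.getD j ∅))
    (fun L _ => PowerSeries.C ((-1 : ℚ) ^ L.length * (L.length : ℚ)⁻¹) * prodF P L)]
  have step2 : ∑ M ∈ (OP U).filter (fun M => c ∈ M.headI),
      PowerSeries.C ((-1 : ℚ) ^ M.length) * prodF P M =
      ∑ p ∈ ((OP U).filter (fun M => c ∈ M.headI)).sigma (fun M => Finset.range M.length),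
        PowerSeries.C ((-1 : ℚ) ^ p.1.length * (p.1.length : ℚ)⁻¹) * prodF P p.1 := by
    rw [Finset.sum_sigma]
    apply Finset.sum_congr rfl
    intro M hM
    rw [Finset.mem_filter] at hM
    have hMne : M ≠ [] := headI_ne_nil hM.2
    have hlen : M.length ≠ 0 := fun h => hMne (List.length_eq_zero_iff.1 h)
    have hconst : ∀ s ∈ Finset.range M.length,
        (PowerSeries.C ((-1 : ℚ) ^ (⟨M, s⟩ : Σ _ : List (Finset ℚ), ℕ).fst.length *
          ((⟨M, s⟩ : Σ _ : List (Finset ℚ), ℕ).fst.length : ℚ)⁻¹) *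
          prodF P (⟨M, s⟩ : Σ _ : List (Finset ℚ), ℕ).fst) =
        PowerSeries.C ((-1 : ℚ) ^ M.length * (M.length : ℚ)⁻¹) * prodF P M :=
      fun s _ => rfl
    rw [Finset.sum_congr rfl hconst, Finset.sum_const, Finset.card_range, nsmul_eq_mul]
    rw [show ((M.length : ℕ) : PowerSeries ℚ) = PowerSeries.C ((M.length : ℕ) : ℚ) by
      simp]
    rw [← mul_assoc, ← map_mul]
    congr 2
    field_simp
  rw [step2]
  refine Finset.sum_nbij' (i := fun p => ⟨p.1.rotate p.2, p.2⟩)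
    (j := fun p => ⟨p.1.rotate (p.1.length - p.2), p.2⟩) ?_ ?_ ?_ ?_ ?_
  · rintro ⟨L, j⟩ hp
    simp only [Finset.mem_sigma, Finset.mem_filter, Finset.mem_range] at hp ⊢
    obtain ⟨hL, hjlen, hcj⟩ := hp
    have hrot : L.rotate j ∈ OP U := OP_rotate hL j
    have hlenpos : 0 < L.length := by omega
    have hlenrot : (L.rotate j).length = L.length := List.length_rotate L j
    refine ⟨⟨hrot, ?_⟩, by omega⟩
    -- c ∈ (L.rotate j).headI
    have h0 : (0 : ℕ) < (L.rotate j).length := by omega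
    have hget : (L.rotate j).get ⟨0, h0⟩ = L.get ⟨(0 + j) % L.length, Nat.mod_lt _ hlenpos⟩ :=
      List.get_rotate L j ⟨0, h0⟩
    have hmod : (0 + j) % L.length = j := by
      rw [zero_add]
      exact Nat.mod_eq_of_lt hjlen
    have hhead : (L.rotate j).headI = (L.rotate j).get ⟨0, h0⟩ := headI_eq_get h0
    rw [hhead, hget]
    have : L.getD ((0 + j) % L.length) ∅ = L.get ⟨(0 + j) % L.length, Nat.mod_lt _ hlenpos⟩ :=
      List.getD_eq_get L ∅ ⟨_, Nat.mod_lt _ hlenpos⟩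
    rw [← this, hmod]
    exact hcj
  · rintro ⟨M, i⟩ hp
    simp only [Finset.mem_sigma, Finset.mem_filter, Finset.mem_range] at hp ⊢
    obtain ⟨⟨hM, hchead⟩, hilen⟩ := hp
    have hMne : M ≠ [] := headI_ne_nil hchead
    have hlenpos : 0 < M.length := List.length_pos_iff.2 hMne
    have hrot : M.rotate (M.length - i) ∈ OP U := OP_rotate hM _
    have hlenrot : (M.rotate (M.length - i)).length = M.length := List.length_rotate M _
    refine ⟨hrot, by omega, ?_⟩
    have hi' : i < (M.rotate (M.length - i)).length := by omega
    have hget : (M.rotate (M.length - i)).get ⟨i, hi'⟩ =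
        M.get ⟨(i + (M.length - i)) % M.length, Nat.mod_lt _ hlenpos⟩ :=
      List.get_rotate M _ ⟨i, hi'⟩
    have hmod : (i + (M.length - i)) % M.length = 0 := by
      have : i + (M.length - i) = M.length := by omega
      rw [this, Nat.mod_self]
    have hgetD : (M.rotate (M.length - i)).getD i ∅ =
        (M.rotate (M.length - i)).get ⟨i, hi'⟩ := List.getD_eq_get _ ∅ ⟨i, hi'⟩
    rw [hgetD, hget]
    have hhead : M.headI = M.get ⟨0, hlenpos⟩ := headI_eq_get hlenpos
    have : M.get ⟨(i + (M.length - i)) % M.length, Nat.mod_lt _ hlenpos⟩ =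
        M.get ⟨0, hlenpos⟩ := by
      congr 1
      exact Fin.ext hmod
    rw [this, ← hhead]
    exact hchead
  · rintro ⟨L, j⟩ hp
    simp only [Finset.mem_sigma, Finset.mem_filter, Finset.mem_range] at hp
    have hjlen : j < L.length := hp.2.1
    have h1 : (L.rotate j).length = L.length := List.length_rotate L j
    have h2 : (L.rotate j).rotate ((L.rotate j).length - j) = L := by
      rw [h1, List.rotate_rotate, show j + (L.length - j) = L.length by omega,
        List.rotate_length]
    simp only [h2]
  · rintro ⟨M, i⟩ hp
    simp only [Finset.mem_sigma, Finset.mem_filter, Finset.mem_range] at hp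
    have hMne : M ≠ [] := headI_ne_nil hp.1.2
    have hlenpos : 0 < M.length := List.length_pos_iff.2 hMne
    have hilen : i < M.length := hp.2
    have h2 : (M.rotate (M.length - i)).rotate i = M := by
      rw [List.rotate_rotate, show M.length - i + i = M.length by omega, List.rotate_length]
    simp only [h2]
  · rintro ⟨L, j⟩ hp
    have h1 : (L.rotate j).length = L.length := List.length_rotate L j
    rw [prodF_rotate, h1]

end

end ChapmanProof

namespace ChapmanProof

noncomputable section

open PowerSeries

variable (P : ℕ → Polynomial ℚ)

lemma filter_insert_bij {U : Finset ℚ} {c : ℚ} (hc : c ∈ U)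
    (f : Finset ℚ → PowerSeries ℚ) :
    ∑ T ∈ U.powerset.filter (fun T => c ∈ T), f T =
    ∑ T' ∈ (U \ {c}).powerset, f (insert c T') := by
  refine Finset.sum_nbij' (i := fun T => T.erase c) (j := fun T' => insert c T')
    ?_ ?_ ?_ ?_ ?_
  · intro T hT
    rw [Finset.mem_filter, Finset.mem_powerset] at hT
    rw [Finset.mem_powerset]
    intro a ha
    rw [Finset.mem_erase] at ha
    rw [Finset.mem_sdiff, Finset.mem_singleton]
    exact ⟨hT.1 ha.2, ha.1⟩
  · intro T' hT'
    rw [Finset.mem_powerset] at hT'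
    rw [Finset.mem_filter, Finset.mem_powerset]
    constructor
    · apply Finset.insert_subset hc
      intro a ha
      exact (Finset.mem_sdiff.1 (hT' ha)).1
    · exact Finset.mem_insert_self _ _
  · intro T hT
    rw [Finset.mem_filter] at hT
    exact Finset.insert_erase hT.2
  · intro T' hT'
    rw [Finset.mem_powerset] at hT'
    apply Finset.erase_insert
    intro hcT'
    exact (Finset.mem_sdiff.1 (hT' hcT')).2 (Finset.mem_singleton_self c)
  · intro T hT
    rw [Finset.mem_filter] at hT
    rw [Finset.insert_erase hT.2]

lemma sumOPc {U : Finset ℚ} {c : ℚ} (hc : c ∈ U) :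
    ∑ M ∈ (OP U).filter (fun M => c ∈ M.headI),
      PowerSeries.C ((-1 : ℚ) ^ M.length) * prodF P M =
    -(Rel P c (U \ {c})) := by
  have hU : U ≠ ∅ := fun h => by rw [h] at hc; exact Finset.notMem_empty c hc
  rw [Finset.sum_filter, sum_OP_nonempty hU]
  have step : ∀ T ∈ U.powerset.erase ∅,
      (∑ L' ∈ OP (U \ T), if c ∈ (T :: L').headI then
        PowerSeries.C ((-1 : ℚ) ^ (T :: L').length) * prodF P (T :: L') else 0) =
      if c ∈ T then -(Fs P 0 T * gX P (U \ T)) else 0 := by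
    intro T _
    by_cases hcT : c ∈ T
    · rw [if_pos hcT]
      have : ∀ L' ∈ OP (U \ T),
          (if c ∈ (T :: L').headI then
            PowerSeries.C ((-1 : ℚ) ^ (T :: L').length) * prodF P (T :: L') else 0) =
          -(Fs P 0 T * (PowerSeries.C ((-1 : ℚ) ^ L'.length) * prodF P L')) := by
        intro L' _
        rw [if_pos (by simpa using hcT)]
        simp only [List.length_cons, prodF, List.map_cons, List.prod_cons]
        rw [pow_succ, map_mul, map_neg, map_one]
        ring
      rw [Finset.sum_congr rfl this, Finset.sum_neg_distrib, ← Finset.mul_sum]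
      rfl
    · rw [if_neg hcT]
      apply Finset.sum_eq_zero
      intro L' _
      rw [if_neg (by simpa using hcT)]
  rw [Finset.sum_congr rfl step]
  have hins : (if c ∈ (∅ : Finset ℚ) then -(Fs P 0 ∅ * gX P (U \ ∅)) else 0) = 0 := by
    simp
  have hfull : ∑ T ∈ U.powerset,
      (if c ∈ T then -(Fs P 0 T * gX P (U \ T)) else 0) =
      ∑ T ∈ U.powerset.erase ∅,
      (if c ∈ T then -(Fs P 0 T * gX P (U \ T)) else 0) := by
    rw [← Finset.add_sum_erase _ _ (Finset.mem_powerset.2 (Finset.empty_subset U)), hins,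
      zero_add]
  rw [← hfull, ← Finset.sum_filter, filter_insert_bij hc, Finset.sum_neg_distrib]
  congr 1
  unfold Rel cnv
  apply Finset.sum_congr rfl
  intro T' hT'
  rw [Finset.mem_powerset] at hT'
  have hcT' : c ∉ T' := fun h => (Finset.mem_sdiff.1 (hT' h)).2 (Finset.mem_singleton_self c)
  rw [Fs_shift hcT']
  have hsd : U \ insert c T' = (U \ {c}) \ T' := by
    ext a
    simp only [Finset.mem_sdiff, Finset.mem_insert, Finset.mem_singleton]
    tauto
  rw [hsd]

/-- weight lists of given length and sum -/
def WLists : ℕ → ℕ → Finset (List ℕ)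
  | w, 0 => if w = 0 then {([] : List ℕ)} else ∅
  | w, r+1 => (Finset.range (w+1)).biUnion fun a => (WLists (w-a) r).image (fun l => a :: l)

lemma mem_WLists : ∀ (r w : ℕ) (l : List ℕ), l ∈ WLists w r ↔ l.length = r ∧ l.sum = w := by
  intro r
  induction r with
  | zero =>
      intro w l
      by_cases hw : w = 0
      · subst hw
        rw [WLists, if_pos rfl, Finset.mem_singleton]
        constructor
        · rintro rfl; exact ⟨rfl, rfl⟩
        · rintro ⟨h1, _⟩
          exact List.length_eq_zero_iff.1 h1
      · rw [WLists, if_neg hw]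
        simp only [Finset.notMem_empty, false_iff]
        rintro ⟨h1, h2⟩
        rw [List.length_eq_zero_iff.1 h1] at h2
        exact hw (by simpa using h2.symm)
  | succ r ih =>
      intro w l
      rw [WLists]
      simp only [Finset.mem_biUnion, Finset.mem_range, Finset.mem_image]
      constructor
      · rintro ⟨a, ha, l', hl', rfl⟩
        obtain ⟨h1, h2⟩ := (ih _ l').1 hl'
        constructor
        · simp [h1]
        · simp only [List.sum_cons, h2]
          omega
      · rintro ⟨h1, h2⟩
        match l with
        | a :: l' =>
          refine ⟨a, ?_, l', ?_, rfl⟩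
          · simp only [List.sum_cons] at h2
            omega
          · apply (ih _ l').2
            constructor
            · simpa using h1
            · simp only [List.sum_cons] at h2
              omega

lemma coeff_prodF : ∀ (L : List (Finset ℚ)) (w : ℕ),
    ∑ ws ∈ WLists w L.length,
      ((L.zip ws).map fun bw => (P bw.2).eval (∑ x ∈ bw.1, x)).prod =
    PowerSeries.coeff w (prodF P L) := by
  intro L
  induction L with
  | nil =>
      intro w
      unfold prodF
      simp only [List.length_nil, List.map_nil, List.prod_nil]
      rw [WLists]
      by_cases hw : w = 0
      · subst hw
        simp
      · rw [if_neg hw]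
        simp [PowerSeries.coeff_one, hw]
  | cons B L' ih =>
      intro w
      have hlen : (B :: L').length = L'.length + 1 := rfl
      rw [hlen, WLists]
      rw [Finset.sum_biUnion]
      · have step : ∀ a ∈ Finset.range (w+1),
            (∑ ws ∈ (WLists (w-a) L'.length).image (fun l => a :: l),
              (((B :: L').zip ws).map fun bw => (P bw.2).eval (∑ x ∈ bw.1, x)).prod) =
            (P a).eval (∑ x ∈ B, x) *
              PowerSeries.coeff (w - a) (prodF P L') := by
          intro a _
          rw [Finset.sum_image (by intro x _ y _ h; simpa using h)]
          rw [← ih (w - a), Finset.mul_sum]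
          apply Finset.sum_congr rfl
          intro ws _
          simp only [List.zip_cons_cons, List.map_cons, List.prod_cons]
        rw [Finset.sum_congr rfl step]
        unfold prodF
        simp only [List.map_cons, List.prod_cons]
        rw [PowerSeries.coeff_mul, Finset.Nat.sum_antidiagonal_eq_sum_range_succ_mk]
        apply Finset.sum_congr rfl
        intro a _
        congr 1
        unfold Fs
        rw [PowerSeries.coeff_mk, add_zero]
        rfl
      · intro a _ b _ hab
        apply Finset.disjoint_left.2
        intro l h1 h2
        simp only [Finset.mem_image] at h1 h2
        obtain ⟨x, _, hx⟩ := h1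
        obtain ⟨y, _, hy⟩ := h2
        rw [← hx] at hy
        injection hy with h3 _
        exact hab h3.symm

end

end ChapmanProof

namespace ChapmanProof

def CFG (S : Finset ℚ) (w : ℕ) : Finset (List (Finset ℚ) × List ℕ) :=
  (OP S).biUnion fun L => (WLists w L.length).image fun ws => (L, ws)

lemma mem_CFG {S : Finset ℚ} {w : ℕ} {p : List (Finset ℚ) × List ℕ} :
    p ∈ CFG S w ↔ p.1 ∈ OP S ∧ p.2 ∈ WLists w p.1.length := by
  unfold CFG
  simp only [Finset.mem_biUnion, Finset.mem_image]
  constructor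
  · rintro ⟨L, hL, ws, hws, rfl⟩
    exact ⟨hL, hws⟩
  · rintro ⟨h1, h2⟩
    exact ⟨p.1, h1, p.2, h2, rfl⟩

def cfgEquiv (S : Finset ℚ) (w : ℕ) :
    WeightedConfig S w ≃ {p : List (Finset ℚ) × List ℕ // p ∈ CFG S w} where
  toFun c := ⟨(c.blocks, c.weights), mem_CFG.2
    ⟨mem_OP.2 ⟨c.nonempty, c.pairwiseDisjoint, c.union_eq⟩,
     (mem_WLists c.blocks.length w c.weights).2 ⟨c.length_eq, c.weight_sum⟩⟩⟩
  invFun x :=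
    { blocks := x.1.1
      weights := x.1.2
      length_eq := ((mem_WLists _ _ _).1 (mem_CFG.1 x.2).2).1
      nonempty := (mem_OP.1 (mem_CFG.1 x.2).1).1
      pairwiseDisjoint := (mem_OP.1 (mem_CFG.1 x.2).1).2.1
      union_eq := (mem_OP.1 (mem_CFG.1 x.2).1).2.2
      weight_sum := ((mem_WLists _ _ _).1 (mem_CFG.1 x.2).2).2 }
  left_inv c := rfl
  right_inv x := rfl

end ChapmanProof

open ChapmanProof

/-- Chapman's theorem: let `g ≥ 2`, let `0 ≤ w ≤ g - 2`, let `S` be a set of `g` distinct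
rationals, and for each natural `v` let `P v ∈ ℚ[x]` be the polynomial of degree `2v`
extending the Stirling number of the first kind `n ↦ [n, n - v]` (for `n ≥ v`).  Then the
sum over all distinct weighted configurations on `S` with total weight `w` of their
evaluations is zero. -/
theorem chapman_weighted_configurations (g : ℕ) (hg : 2 ≤ g) (w : ℕ) (hw : w ≤ g - 2)
    (S : Finset ℚ) (hS : S.card = g)
    (P : ℕ → Polynomial ℚ)
    (hPdeg : ∀ v : ℕ, (P v).degree = (2 * v : ℕ))
    (hPval : ∀ v : ℕ, ∀ n : ℕ, v ≤ n →
      (P v).eval (n : ℚ) = (ascPochhammer ℚ n).coeff (n - v)) :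
    ∑ᶠ c : WeightedConfig S w, c.evaluation P = 0 := by
  have hP0 : P 0 = Polynomial.C 1 := P_zero hPdeg hPval
  have hrec : ∀ (v : ℕ) (x : ℚ),
      (P (v+1)).eval (x+1) = (P (v+1)).eval x + x * (P v).eval x :=
    fun v x => P_rec hPval v x
  have hSne : S.Nonempty := by
    rw [← Finset.card_pos, hS]
    omega
  obtain ⟨c, hc⟩ := hSne
  -- step 1 : finsum to finset sum
  letI : Fintype (WeightedConfig S w) := Fintype.ofEquiv _ (cfgEquiv S w).symm
  have hfin : ∑ᶠ c : WeightedConfig S w, c.evaluation P =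
      ∑ p ∈ CFG S w, ((-1 : ℚ) ^ p.1.length * (p.1.length : ℚ)⁻¹ *
        ((p.1.zip p.2).map fun bw => (P bw.2).eval (∑ x ∈ bw.1, x)).prod) := by
    rw [finsum_eq_sum_of_fintype]
    rw [← Finset.sum_coe_sort (CFG S w)]
    exact Fintype.sum_equiv (cfgEquiv S w) _ _ (fun c => rfl)
  rw [hfin]
  -- step 2 : biUnion decomposition and inner weight sums
  have hstep2 : ∑ p ∈ CFG S w, ((-1 : ℚ) ^ p.1.length * (p.1.length : ℚ)⁻¹ *
        ((p.1.zip p.2).map fun bw => (P bw.2).eval (∑ x ∈ bw.1, x)).prod) =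
      ∑ L ∈ OP S, ((-1 : ℚ) ^ L.length * (L.length : ℚ)⁻¹) *
        PowerSeries.coeff w (prodF P L) := by
    unfold CFG
    rw [Finset.sum_biUnion]
    · apply Finset.sum_congr rfl
      intro L _
      rw [Finset.sum_image (by intro x _ y _ h; simpa using h)]
      rw [← coeff_prodF P L w, Finset.mul_sum]
    · intro L1 _ L2 _ hne
      apply Finset.disjoint_left.2
      intro p h1 h2
      simp only [Finset.mem_image] at h1 h2
      obtain ⟨x, _, hx⟩ := h1
      obtain ⟨y, _, hy⟩ := h2
      rw [← hx] at hy
      apply hne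
      injection hy with h3 _
      exact h3.symm
  rw [hstep2]
  -- step 3 : to power series coefficient
  have hstep3 : ∑ L ∈ OP S, ((-1 : ℚ) ^ L.length * (L.length : ℚ)⁻¹) *
        PowerSeries.coeff w (prodF P L) =
      PowerSeries.coeff w (∑ L ∈ OP S,
        PowerSeries.C ((-1 : ℚ) ^ L.length * (L.length : ℚ)⁻¹) * prodF P L) := by
    rw [map_sum]
    apply Finset.sum_congr rfl
    intro L _
    rw [PowerSeries.coeff_C_mul]
  rw [hstep3, rotation_lemma P hc, sumOPc P hc, map_neg]
  have hcard : w < (S \ {c}).card := by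
    rw [← Finset.erase_eq, Finset.card_erase_of_mem hc, hS]
    omega
  rw [main hP0 hPval hrec (S \ {c}) c w hcard, neg_zero]
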